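/- Let s, u ∈ ℂ with s ≠ 0, let v ∈ ℂ satisfy v² = s, and put ρ(a) = [[v, 1/v],[0, 1/v]], ρ(b) = [[v, 0],[−v·u, 1/v]], ρ(w) = ρ(b)·ρ(a)⁻¹·ρ(b)⁻¹·ρ(a). Let ξ₊, ξ₋ ∈ ℂ satisfy ξ₊·ξ₋ = 1 and ξ₊ + ξ₋ = 2 + 2u − u/s − s·u + u². Let Q = [[u+1−1/s, u+1−1/s],[1−s·u−ξ₊, 1−s·u−ξ₋]]. Then ρ(w)·Q = Q·diag(ξ₊, ξ₋); in particular, if Q is invertible then Q⁻¹·ρ(w)·Q = diag(ξ₊, ξ₋). -/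

import Mathlib

open Matrix

/-- The matrix `Q` diagonalizes `ρ(w)`: `ρ(w)Q = Q·diag(ξ₊, ξ₋)`, and if `Q`
is invertible then `Q⁻¹ρ(w)Q = diag(ξ₊, ξ₋)`. -/
theorem twist_knot_diagonalize_w
    (s u v ξp ξm : ℂ) (hs : s ≠ 0) (hv : v ^ 2 = s)
    (hprod : ξp * ξm = 1)
    (hsum : ξp + ξm = 2 + 2 * u - u / s - s * u + u ^ 2)
    (ρa ρb ρw Q : Matrix (Fin 2) (Fin 2) ℂ)
    (hρa : ρa = !![v, 1 / v; 0, 1 / v])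
    (hρb : ρb = !![v, 0; -v * u, 1 / v])
    (hρw : ρw = ρb * ρa⁻¹ * ρb⁻¹ * ρa)
    (hQ : Q = !![u + 1 - 1 / s, u + 1 - 1 / s;
                 1 - s * u - ξp, 1 - s * u - ξm]) :
    ρw * Q = Q * Matrix.diagonal ![ξp, ξm] ∧
    (IsUnit Q.det → Q⁻¹ * ρw * Q = Matrix.diagonal ![ξp, ξm]) := by
  have key : ρw * Q = Q * Matrix.diagonal ![ξp, ξm] := by
    subst hv
    have hv0 : v ≠ 0 := by intro h; apply hs; rw [h]; ring
    have hγ : v ^ 2 * (ξp + ξm) =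
        2 * v ^ 2 + 2 * u * v ^ 2 - u - v ^ 4 * u + v ^ 2 * u ^ 2 := by
      rw [hsum]; field_simp
    have hrp : v ^ 2 * ξp ^ 2 =
        (2 * v ^ 2 + 2 * u * v ^ 2 - u - v ^ 4 * u + v ^ 2 * u ^ 2) * ξp - v ^ 2 := by
      linear_combination ξp * hγ - v ^ 2 * hprod
    have hrm : v ^ 2 * ξm ^ 2 =
        (2 * v ^ 2 + 2 * u * v ^ 2 - u - v ^ 4 * u + v ^ 2 * u ^ 2) * ξm - v ^ 2 := by
      linear_combination ξm * hγ - v ^ 2 * hprod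
    have hda : ρa.det = 1 := by rw [hρa, det_fin_two_of]; field_simp; simp
    have hdb : ρb.det = 1 := by rw [hρb, det_fin_two_of]; field_simp; simp
    have hia : ρa⁻¹ = !![1/v, -(1/v); 0, v] := by
      rw [inv_def, hda, adjugate_fin_two, hρa]; simp
    have hib : ρb⁻¹ = !![1/v, 0; v*u, v] := by
      rw [inv_def, hdb, adjugate_fin_two, hρb]; simp
    rw [hρw, hia, hib, hρa, hρb, hQ]
    ext i j
    fin_cases i <;> fin_cases j <;>
      simp [Matrix.mul_apply, Fin.sum_univ_two, Matrix.diagonal] <;>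
      field_simp <;>
      ring_nf
    · linear_combination hrp
    · linear_combination hrm
  refine ⟨key, fun hdet => ?_⟩
  rw [mul_assoc, key, ← mul_assoc, nonsing_inv_mul _ hdet, one_mul]
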